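/- Let H be an n×n symmetric positive definite matrix and S an n×n skew-symmetric matrix, and let ω > (1/2)(1 + ρ(H^{−1/2}SH^{−1/2})²). Then every eigenvalue λ of the matrix (1 − 1/ω)I − (1/ω)H^{−1/2}SH^{−1/2} satisfies |λ| < 1. -/

import Mathlib

open Matrix

/-- `μ : ℂ` is an eigenvalue of the real matrix `K`. -/
def HasCEigenvalue {n : ℕ} (K : Matrix (Fin n) (Fin n) ℝ) (μ : ℂ) : Prop :=
  ∃ v : Fin n → ℂ, v ≠ 0 ∧ (K.map (Complex.ofReal)).mulVec v = μ • v

/-- The spectral radius of a real matrix, as the supremum of the moduli of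
its complex eigenvalues. -/
noncomputable def specRadius {n : ℕ} (K : Matrix (Fin n) (Fin n) ℝ) : ℝ :=
  sSup {r : ℝ | ∃ μ : ℂ, HasCEigenvalue K μ ∧ r = ‖μ‖}

attribute [local instance] Matrix.linftyOpNormedAddCommGroup Matrix.linftyOpNormedRing

lemma eig_bound {n : ℕ} (K : Matrix (Fin n) (Fin n) ℝ) (μ : ℂ)
    (h : HasCEigenvalue K μ) : ‖μ‖ ≤ ‖K.map (Complex.ofReal)‖ := by
  obtain ⟨v, hv, hKv⟩ := h
  have hnv : 0 < ‖v‖ := norm_pos_iff.mpr hv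
  have := Matrix.linfty_opNorm_mulVec (K.map (Complex.ofReal)) v
  rw [hKv, norm_smul] at this
  have : ‖μ‖ * ‖v‖ ≤ ‖K.map (Complex.ofReal)‖ * ‖v‖ := this
  exact le_of_mul_le_mul_right this hnv

lemma bdd {n : ℕ} (K : Matrix (Fin n) (Fin n) ℝ) :
    BddAbove {r : ℝ | ∃ μ : ℂ, HasCEigenvalue K μ ∧ r = ‖μ‖} := by
  refine ⟨‖K.map (Complex.ofReal)‖, ?_⟩
  rintro r ⟨μ, hμ, rfl⟩
  exact eig_bound K μ hμ

open scoped ComplexOrder in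
lemma skew_eig_im {n : ℕ} (K : Matrix (Fin n) (Fin n) ℝ) (hK : Kᵀ = -K) (ν : ℂ)
    (h : HasCEigenvalue K ν) : ν.re = 0 := by
  obtain ⟨v, hv, hMv⟩ := h
  set M := K.map (Complex.ofReal) with hM
  have hMH : Mᴴ = -M := by
    ext i j
    have := congrFun (congrFun hK i) j
    simp only [Matrix.transpose_apply, Matrix.neg_apply] at this
    simp [hM, Matrix.conjTranspose_apply, this]
  have hd : star v ⬝ᵥ v ≠ 0 := fun h => hv (dotProduct_star_self_eq_zero.mp h)
  have key : star v ⬝ᵥ (M *ᵥ v) = ν * (star v ⬝ᵥ v) := by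
    rw [hMv, dotProduct_smul]; rfl
  have key2 : star ν * (star v ⬝ᵥ v) = (-ν) * (star v ⬝ᵥ v) := by
    calc star ν * (star v ⬝ᵥ v) = star (ν • v) ⬝ᵥ v := by
          simp [star_smul, smul_dotProduct, smul_eq_mul]
      _ = (star v ᵥ* Mᴴ) ⬝ᵥ v := by rw [← hMv, Matrix.star_mulVec]
      _ = -((star v ᵥ* M) ⬝ᵥ v) := by rw [hMH]; simp [Matrix.vecMul_neg, neg_dotProduct]
      _ = -(star v ⬝ᵥ (M *ᵥ v)) := by rw [Matrix.dotProduct_mulVec]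
      _ = (-ν) * (star v ⬝ᵥ v) := by rw [key]; ring
  have hs : star ν = -ν := mul_right_cancel₀ hd key2
  have := congrArg Complex.re hs
  simp [Complex.neg_re] at this
  linarith

theorem gcp_symmetric_convergence {n : ℕ}
    (H S : Matrix (Fin n) (Fin n) ℝ) (hH : H.PosDef) (hS : Sᵀ = -S)
    (T : Matrix (Fin n) (Fin n) ℝ)
    (hT : T = (hH.posSemidef.1.eigenvectorUnitary.1 * diagonal ((↑) ∘ (Real.sqrt ∘ hH.posSemidef.1.eigenvalues)) * (star hH.posSemidef.1.eigenvectorUnitary : Matrix (Fin n) (Fin n) ℝ))⁻¹ * S * (hH.posSemidef.1.eigenvectorUnitary.1 * diagonal ((↑) ∘ (Real.sqrt ∘ hH.posSemidef.1.eigenvalues)) * (star hH.posSemidef.1.eigenvectorUnitary : Matrix (Fin n) (Fin n) ℝ))⁻¹)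
    (ω : ℝ) (hω : ω > (1 / 2) * (1 + specRadius T ^ 2)) :
    ∀ μ : ℂ, HasCEigenvalue ((1 - 1 / ω) • (1 : Matrix (Fin n) (Fin n) ℝ) - (1 / ω) • T) μ →
      ‖μ‖ < 1 := by
  -- T is skew-symmetric
  set R : Matrix (Fin n) (Fin n) ℝ := (hH.posSemidef.1.eigenvectorUnitary.1 * diagonal ((↑) ∘ (Real.sqrt ∘ hH.posSemidef.1.eigenvalues)) * (star hH.posSemidef.1.eigenvectorUnitary : Matrix (Fin n) (Fin n) ℝ)) with hR
  have hRsym : Rᵀ = R := by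
    rw [hR]
    simp [Matrix.transpose_mul, Matrix.mul_assoc, Matrix.star_eq_conjTranspose,
      Matrix.conjTranspose_eq_transpose_of_trivial]
  have hTskew : Tᵀ = -T := by
    rw [hT]
    rw [Matrix.transpose_mul, Matrix.transpose_mul, Matrix.transpose_nonsing_inv, hRsym, hS]
    simp [Matrix.mul_assoc]
  have hρ : (0:ℝ) ≤ specRadius T ^ 2 := sq_nonneg _
  have hω0 : (0:ℝ) < ω := by nlinarith
  intro μ hμ
  obtain ⟨v, hv, hMv⟩ := hμ
  set M := T.map (Complex.ofReal) with hM
  set a : ℝ := 1 - 1/ω with ha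
  set c : ℂ := ((1/ω : ℝ) : ℂ) with hc
  have hc0 : c ≠ 0 := by
    simp [hc]
    positivity
  have hmap : (((1 - 1/ω) • (1 : Matrix (Fin n) (Fin n) ℝ) - (1/ω) • T).map Complex.ofReal)
      = (a : ℂ) • (1 : Matrix (Fin n) (Fin n) ℂ) - c • M := by
    ext i j
    by_cases hij : i = j <;>
      simp [Matrix.map_apply, Matrix.one_apply, hij, hM, hc, ha, Matrix.smul_apply]
  rw [hmap] at hMv
  have hMv' : (a : ℂ) • v - c • (M *ᵥ v) = μ • v := by
    rw [← hMv, Matrix.sub_mulVec, Matrix.smul_mulVec, Matrix.smul_mulVec,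
      Matrix.one_mulVec]
  set ν : ℂ := c⁻¹ * ((a : ℂ) - μ) with hν
  have hTeig : HasCEigenvalue T ν := by
    refine ⟨v, hv, ?_⟩
    have hstep : c • (M *ᵥ v) = ((a:ℂ) - μ) • v := by
      have h4 := sub_eq_iff_eq_add.mp hMv'
      rw [sub_smul, h4]
      abel
    have h3 := congrArg (fun w => c⁻¹ • w) hstep
    simpa [smul_smul, inv_mul_cancel₀ hc0, hν] using h3
  have hle : ‖ν‖ ≤ specRadius T := le_csSup (bdd T) ⟨ν, hTeig, rfl⟩
  have him : ν.re = 0 := skew_eig_im T hTskew ν hTeig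
  have hμeq : μ = (a:ℂ) - c * ν := by
    rw [hν]
    field_simp
    ring
  have hre : μ.re = a := by
    rw [hμeq]
    simp [hc, Complex.mul_re, him]
  have himμ : μ.im = -(1/ω * ν.im) := by
    rw [hμeq]
    simp [hc, Complex.mul_im, him]
  have h1 : ‖μ‖ ^ 2 = a^2 + (1/ω * ν.im)^2 := by
    rw [Complex.sq_norm, Complex.normSq_apply, hre, himμ]
    ring
  have h2 : ν.im ^ 2 ≤ specRadius T ^ 2 := by
    have h3 : ‖ν‖ ^ 2 = ν.im ^ 2 := by
      rw [Complex.sq_norm, Complex.normSq_apply, him]; ring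
    nlinarith [norm_nonneg ν]
  have habs : (0:ℝ) ≤ ‖μ‖ := norm_nonneg μ
  have hsq : ‖μ‖ ^ 2 < 1 := by
    rw [h1, ha]
    have hω2 : (0:ℝ) < ω^2 := by positivity
    have hne : ω ≠ 0 := ne_of_gt hω0
    have key : (1 - 1/ω)^2 + (1/ω * ν.im)^2 = ((ω-1)^2 + ν.im^2)/ω^2 := by
      field_simp
    rw [key, div_lt_one hω2]
    nlinarith
  nlinarith
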